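/- Let k be a field, Ω a commutative k-algebra, X a scheme over k, and S a scheme over Ω. Suppose given, for every commutative k-algebra R, a map φ_R from the set of k-morphisms Spec R → X to the set of Ω-morphisms Spec(R ⊗_k Ω) → S, and suppose this family is natural in R, i.e. for every k-algebra homomorphism g : R' → R and every k-morphism f : Spec R' → X one has φ_R(f ∘ Spec(g)) = φ_{R'}(f) ∘ Spec(g ⊗_k id_Ω). Then there exists a unique Ω-morphism φ_Ω : X ×_{Spec k} Spec Ω → S such that for every commutative k-algebra R and every k-morphism f : Spec R → X, the morphism φ_R(f) equals the composite of the base-change morphism Spec(R ⊗_k Ω) ≅ Spec R ×_{Spec k} Spec Ω → X ×_{Spec k} Spec Ω induced by f with φ_Ω. -/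

import Mathlib

universe u

open AlgebraicGeometry CategoryTheory CategoryTheory.Limits TensorProduct

namespace Stmt1Aux

variable (k : Type u) [Field k] (Ω : Type u) [CommRing Ω] [Algebra k Ω]

lemma inc_comm (R : Type u) [CommRing R] [Algebra k R] :
    (Algebra.TensorProduct.includeLeftRingHom : R →+* R ⊗[k] Ω).comp (algebraMap k R) =
      ((Algebra.TensorProduct.includeRight : Ω →ₐ[k] R ⊗[k] Ω).toRingHom).comp
        (algebraMap k Ω) := by
  ext c
  simp only [RingHom.coe_comp, Function.comp_apply,
    Algebra.TensorProduct.includeLeftRingHom_apply, AlgHom.toRingHom_eq_coe,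
    RingHom.coe_coe, Algebra.TensorProduct.includeRight_apply]
  rw [Algebra.algebraMap_eq_smul_one, Algebra.algebraMap_eq_smul_one, TensorProduct.smul_tmul]

variable (X S : Scheme.{u}) (fX : X ⟶ Spec (CommRingCat.of k))
  (φ : ∀ (R : Type u) [CommRing R] [Algebra k R]
      (f : Spec (CommRingCat.of R) ⟶ X),
      f ≫ fX = Spec.map (CommRingCat.ofHom (algebraMap k R)) →
      (Spec (CommRingCat.of (R ⊗[k] Ω)) ⟶ S))

lemma congrφ (R : Type u) [CommRing R] [Algebra k R]
    (f₁ f₂ : Spec (CommRingCat.of R) ⟶ X) (h : f₁ = f₂)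
    (hf₁ : f₁ ≫ fX = Spec.map (CommRingCat.ofHom (algebraMap k R)))
    (hf₂ : f₂ ≫ fX = Spec.map (CommRingCat.ofHom (algebraMap k R))) :
    φ R f₁ hf₁ = φ R f₂ hf₂ := by
  subst h; rfl

variable
  (hnat : ∀ (R' R : Type u) [CommRing R'] [Algebra k R'] [CommRing R] [Algebra k R]
      (g : R' →ₐ[k] R) (f : Spec (CommRingCat.of R') ⟶ X)
      (hf : f ≫ fX = Spec.map (CommRingCat.ofHom (algebraMap k R')))
      (hgf : (Spec.map (CommRingCat.ofHom (g : R' →+* R)) ≫ f) ≫ fX =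
        Spec.map (CommRingCat.ofHom (algebraMap k R))),
      φ R (Spec.map (CommRingCat.ofHom (g : R' →+* R)) ≫ f) hgf =
        Spec.map (CommRingCat.ofHom
          ((Algebra.TensorProduct.map g (AlgHom.id k Ω)).toRingHom)) ≫ φ R' f hf)

include hnat in
lemma keyAffine (R₁ R₂ : Type u) [CommRing R₁] [Algebra k R₁] [CommRing R₂] [Algebra k R₂]
    (f₁ : Spec (CommRingCat.of R₁) ⟶ X) (f₂ : Spec (CommRingCat.of R₂) ⟶ X)
    (hf₁ : f₁ ≫ fX = Spec.map (CommRingCat.ofHom (algebraMap k R₁)))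
    (hf₂ : f₂ ≫ fX = Spec.map (CommRingCat.ofHom (algebraMap k R₂)))
    (A : Type u) [CommRing A]
    (t₁ : Spec (CommRingCat.of A) ⟶ Spec (CommRingCat.of (R₁ ⊗[k] Ω)))
    (t₂ : Spec (CommRingCat.of A) ⟶ Spec (CommRingCat.of (R₂ ⊗[k] Ω)))
    (hX : t₁ ≫ Spec.map (CommRingCat.ofHom
        (Algebra.TensorProduct.includeLeftRingHom : R₁ →+* R₁ ⊗[k] Ω)) ≫ f₁ =
      t₂ ≫ Spec.map (CommRingCat.ofHom
        (Algebra.TensorProduct.includeLeftRingHom : R₂ →+* R₂ ⊗[k] Ω)) ≫ f₂)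
    (hΩ' : t₁ ≫ Spec.map (CommRingCat.ofHom
        ((Algebra.TensorProduct.includeRight : Ω →ₐ[k] R₁ ⊗[k] Ω).toRingHom)) =
      t₂ ≫ Spec.map (CommRingCat.ofHom
        ((Algebra.TensorProduct.includeRight : Ω →ₐ[k] R₂ ⊗[k] Ω).toRingHom))) :
    t₁ ≫ φ R₁ f₁ hf₁ = t₂ ≫ φ R₂ f₂ hf₂ := by
  obtain ⟨τ₁, rfl⟩ : ∃ τ, Spec.map τ = t₁ := ⟨Spec.preimage t₁, Spec.map_preimage t₁⟩
  obtain ⟨τ₂, rfl⟩ : ∃ τ, Spec.map τ = t₂ := ⟨Spec.preimage t₂, Spec.map_preimage t₂⟩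
  have hττ : (τ₁.hom : (R₁ ⊗[k] Ω) →+* A).comp
      ((Algebra.TensorProduct.includeRight : Ω →ₐ[k] R₁ ⊗[k] Ω).toRingHom) =
      (τ₂.hom : (R₂ ⊗[k] Ω) →+* A).comp
      ((Algebra.TensorProduct.includeRight : Ω →ₐ[k] R₂ ⊗[k] Ω).toRingHom) := by
    rw [← Spec.map_comp, ← Spec.map_comp] at hΩ'
    exact congrArg CommRingCat.Hom.hom (Spec.map_injective hΩ')
  letI : Algebra Ω A := ((τ₁.hom : (R₁ ⊗[k] Ω) →+* A).comp
      ((Algebra.TensorProduct.includeRight : Ω →ₐ[k] R₁ ⊗[k] Ω).toRingHom)).toAlgebra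
  letI : Algebra k A := ((algebraMap Ω A).comp (algebraMap k Ω)).toAlgebra
  haveI : IsScalarTower k Ω A := IsScalarTower.of_algebraMap_eq' rfl
  have hτinc₁ : (τ₁.hom : (R₁ ⊗[k] Ω) →+* A).comp
      ((Algebra.TensorProduct.includeRight : Ω →ₐ[k] R₁ ⊗[k] Ω).toRingHom) =
      algebraMap Ω A := rfl
  have hτinc₂ : (τ₂.hom : (R₂ ⊗[k] Ω) →+* A).comp
      ((Algebra.TensorProduct.includeRight : Ω →ₐ[k] R₂ ⊗[k] Ω).toRingHom) =
      algebraMap Ω A := hττ ▸ rfl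
  have gcomm : ∀ (R : Type u) [CommRing R] [Algebra k R]
      (τ : (R ⊗[k] Ω) →+* A), τ.comp
        ((Algebra.TensorProduct.includeRight : Ω →ₐ[k] R ⊗[k] Ω).toRingHom) = algebraMap Ω A →
      ∀ c : k, τ (Algebra.TensorProduct.includeLeftRingHom (algebraMap k R c)) =
        algebraMap k A c := by
    intro R _ _ τ hτ c
    have h1 : (Algebra.TensorProduct.includeLeftRingHom (algebraMap k R c) : R ⊗[k] Ω) =
        (Algebra.TensorProduct.includeRight : Ω →ₐ[k] R ⊗[k] Ω).toRingHom (algebraMap k Ω c) :=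
      congrFun (congrArg (fun (f : k →+* R ⊗[k] Ω) => (f : k → R ⊗[k] Ω)) (inc_comm k Ω R)) c
    have h2 : algebraMap k A c = algebraMap Ω A (algebraMap k Ω c) := rfl
    rw [h1, h2, ← hτ]; rfl
  let g₁ : R₁ →ₐ[k] A :=
    { toRingHom := (τ₁.hom : (R₁ ⊗[k] Ω) →+* A).comp
        (Algebra.TensorProduct.includeLeftRingHom : R₁ →+* R₁ ⊗[k] Ω)
      commutes' := gcomm R₁ τ₁.hom hτinc₁ }
  let g₂ : R₂ →ₐ[k] A :=
    { toRingHom := (τ₂.hom : (R₂ ⊗[k] Ω) →+* A).comp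
        (Algebra.TensorProduct.includeLeftRingHom : R₂ →+* R₂ ⊗[k] Ω)
      commutes' := gcomm R₂ τ₂.hom hτinc₂ }
  let μ : A ⊗[k] Ω →ₐ[k] A :=
    Algebra.TensorProduct.lift (AlgHom.id k A) (IsScalarTower.toAlgHom k Ω A)
      (fun _ _ => Commute.all _ _)
  have hτμ : ∀ (R : Type u) [CommRing R] [Algebra k R]
      (τ : (R ⊗[k] Ω) →+* A) (g : R →ₐ[k] A),
      τ.comp ((Algebra.TensorProduct.includeRight : Ω →ₐ[k] R ⊗[k] Ω).toRingHom) =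
        algebraMap Ω A →
      (g : R →+* A) = τ.comp (Algebra.TensorProduct.includeLeftRingHom : R →+* R ⊗[k] Ω) →
      τ = (μ.toRingHom).comp (Algebra.TensorProduct.map g (AlgHom.id k Ω)).toRingHom := by
    intro R _ _ τ g hτ hg
    refine RingHom.ext fun x => ?_
    induction x using TensorProduct.induction_on with
    | zero => simp
    | tmul r ω =>
        simp only [AlgHom.toRingHom_eq_coe, RingHom.coe_comp, RingHom.coe_coe,
          Function.comp_apply, Algebra.TensorProduct.map_tmul, AlgHom.coe_id, id_eq,
          Algebra.TensorProduct.lift_tmul, μ, AlgHom.id_apply, IsScalarTower.coe_toAlgHom']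
        have hsplit : (r ⊗ₜ[k] ω : R ⊗[k] Ω) = Algebra.TensorProduct.includeLeftRingHom r *
            (Algebra.TensorProduct.includeRight : Ω →ₐ[k] R ⊗[k] Ω).toRingHom ω := by
          simp [Algebra.TensorProduct.tmul_mul_tmul]
        have h1 : τ (Algebra.TensorProduct.includeLeftRingHom r) = g r :=
          (congrFun (congrArg (fun (f : R →+* A) => (f : R → A)) hg) r).symm
        have h2 : τ ((Algebra.TensorProduct.includeRight : Ω →ₐ[k] R ⊗[k] Ω).toRingHom ω) =
            algebraMap Ω A ω :=
          congrFun (congrArg (fun (f : Ω →+* A) => (f : Ω → A)) hτ) ω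
        rw [hsplit, map_mul, h1, h2]
    | add x y hx hy => simp only [map_add, hx, hy]
  have hgf : ∀ (R : Type u) [CommRing R] [Algebra k R] (g : R →ₐ[k] A)
      (f : Spec (CommRingCat.of R) ⟶ X)
      (hf : f ≫ fX = Spec.map (CommRingCat.ofHom (algebraMap k R))),
      (Spec.map (CommRingCat.ofHom (g : R →+* A)) ≫ f) ≫ fX =
        Spec.map (CommRingCat.ofHom (algebraMap k A)) := by
    intro R _ _ g f hf
    rw [Category.assoc, hf, ← Spec.map_comp]
    congr 1
    exact congrArg CommRingCat.ofHom g.comp_algebraMap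
  have e₁ : Spec.map τ₁ ≫ φ R₁ f₁ hf₁ =
      Spec.map (CommRingCat.ofHom (μ : A ⊗[k] Ω →+* A)) ≫
        φ A (Spec.map (CommRingCat.ofHom (g₁ : R₁ →+* A)) ≫ f₁) (hgf R₁ g₁ f₁ hf₁) := by
    rw [hnat R₁ A g₁ f₁ hf₁ (hgf R₁ g₁ f₁ hf₁), ← Category.assoc, ← Spec.map_comp]
    exact congrArg (· ≫ _) (congrArg Spec.map (CommRingCat.hom_ext (hτμ R₁ τ₁.hom g₁ hτinc₁ rfl)))
  have e₂ : Spec.map τ₂ ≫ φ R₂ f₂ hf₂ =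
      Spec.map (CommRingCat.ofHom (μ : A ⊗[k] Ω →+* A)) ≫
        φ A (Spec.map (CommRingCat.ofHom (g₂ : R₂ →+* A)) ≫ f₂) (hgf R₂ g₂ f₂ hf₂) := by
    rw [hnat R₂ A g₂ f₂ hf₂ (hgf R₂ g₂ f₂ hf₂), ← Category.assoc, ← Spec.map_comp]
    exact congrArg (· ≫ _) (congrArg Spec.map (CommRingCat.hom_ext (hτμ R₂ τ₂.hom g₂ hτinc₂ rfl)))
  have hm : Spec.map (CommRingCat.ofHom (g₁ : R₁ →+* A)) ≫ f₁ =
      Spec.map (CommRingCat.ofHom (g₂ : R₂ →+* A)) ≫ f₂ := by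
    have h1 : Spec.map (CommRingCat.ofHom (g₁ : R₁ →+* A)) =
        Spec.map τ₁ ≫ Spec.map (CommRingCat.ofHom
          (Algebra.TensorProduct.includeLeftRingHom : R₁ →+* R₁ ⊗[k] Ω)) := by
      rw [← Spec.map_comp]; rfl
    have h2 : Spec.map (CommRingCat.ofHom (g₂ : R₂ →+* A)) =
        Spec.map τ₂ ≫ Spec.map (CommRingCat.ofHom
          (Algebra.TensorProduct.includeLeftRingHom : R₂ →+* R₂ ⊗[k] Ω)) := by
      rw [← Spec.map_comp]; rfl
    rw [h1, h2, Category.assoc, Category.assoc, hX]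
  rw [e₁, e₂, congrφ k Ω X S fX φ A _ _ hm (hgf R₁ g₁ f₁ hf₁) (hgf R₂ g₂ f₂ hf₂)]

include hnat in
lemma key (R₁ R₂ : Type u) [CommRing R₁] [Algebra k R₁] [CommRing R₂] [Algebra k R₂]
    (f₁ : Spec (CommRingCat.of R₁) ⟶ X) (f₂ : Spec (CommRingCat.of R₂) ⟶ X)
    (hf₁ : f₁ ≫ fX = Spec.map (CommRingCat.ofHom (algebraMap k R₁)))
    (hf₂ : f₂ ≫ fX = Spec.map (CommRingCat.ofHom (algebraMap k R₂)))
    (T : Scheme.{u})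
    (t₁ : T ⟶ Spec (CommRingCat.of (R₁ ⊗[k] Ω)))
    (t₂ : T ⟶ Spec (CommRingCat.of (R₂ ⊗[k] Ω)))
    (hX : t₁ ≫ Spec.map (CommRingCat.ofHom
        (Algebra.TensorProduct.includeLeftRingHom : R₁ →+* R₁ ⊗[k] Ω)) ≫ f₁ =
      t₂ ≫ Spec.map (CommRingCat.ofHom
        (Algebra.TensorProduct.includeLeftRingHom : R₂ →+* R₂ ⊗[k] Ω)) ≫ f₂)
    (hΩ' : t₁ ≫ Spec.map (CommRingCat.ofHom
        ((Algebra.TensorProduct.includeRight : Ω →ₐ[k] R₁ ⊗[k] Ω).toRingHom)) =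
      t₂ ≫ Spec.map (CommRingCat.ofHom
        ((Algebra.TensorProduct.includeRight : Ω →ₐ[k] R₂ ⊗[k] Ω).toRingHom))) :
    t₁ ≫ φ R₁ f₁ hf₁ = t₂ ≫ φ R₂ f₂ hf₂ := by
  obtain ⟨𝒱⟩ : Nonempty T.AffineOpenCover := ⟨T.affineOpenCover⟩
  let 𝒰 : T.OpenCover :=
    { I₀ := 𝒱.I₀
      X := fun j => Spec (𝒱.X j)
      f := 𝒱.f
      mem₀ := 𝒱.openCover.mem₀ }
  refine 𝒰.hom_ext _ _ fun (j : 𝒱.I₀) => ?_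
  have h := keyAffine k Ω X S fX φ hnat R₁ R₂ f₁ f₂ hf₁ hf₂ (↥(𝒱.X j))
    (𝒱.f j ≫ t₁) (𝒱.f j ≫ t₂)
    (by rw [Category.assoc, Category.assoc, hX]) (by rw [Category.assoc, Category.assoc, hΩ'])
  rw [Category.assoc, Category.assoc] at h; exact h

include hnat in
lemma mainlem
    (fS : S ⟶ Spec (CommRingCat.of Ω))
    (hover : ∀ (R : Type u) [CommRing R] [Algebra k R]
      (f : Spec (CommRingCat.of R) ⟶ X)
      (hf : f ≫ fX = Spec.map (CommRingCat.ofHom (algebraMap k R))),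
      φ R f hf ≫ fS = Spec.map (CommRingCat.ofHom
        ((Algebra.TensorProduct.includeRight : Ω →ₐ[k] R ⊗[k] Ω).toRingHom))) :
    ∃ φΩ : pullback fX (Spec.map (CommRingCat.ofHom (algebraMap k Ω))) ⟶ S,
      φΩ ≫ fS = pullback.snd fX (Spec.map (CommRingCat.ofHom (algebraMap k Ω))) ∧
      (∀ (R : Type u) [CommRing R] [Algebra k R] (f : Spec (CommRingCat.of R) ⟶ X)
        (hf : f ≫ fX = Spec.map (CommRingCat.ofHom (algebraMap k R)))
        (L : Spec (CommRingCat.of (R ⊗[k] Ω)) ⟶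
          pullback fX (Spec.map (CommRingCat.ofHom (algebraMap k Ω))))
        (hL1 : L ≫ pullback.fst _ _ = Spec.map (CommRingCat.ofHom
          (Algebra.TensorProduct.includeLeftRingHom : R →+* R ⊗[k] Ω)) ≫ f)
        (hL2 : L ≫ pullback.snd _ _ = Spec.map (CommRingCat.ofHom
          ((Algebra.TensorProduct.includeRight : Ω →ₐ[k] R ⊗[k] Ω).toRingHom))),
        φ R f hf = L ≫ φΩ) ∧
      (∀ ψ : pullback fX (Spec.map (CommRingCat.ofHom (algebraMap k Ω))) ⟶ S,
        (∀ (R : Type u) [CommRing R] [Algebra k R] (f : Spec (CommRingCat.of R) ⟶ X)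
          (hf : f ≫ fX = Spec.map (CommRingCat.ofHom (algebraMap k R)))
          (L : Spec (CommRingCat.of (R ⊗[k] Ω)) ⟶
            pullback fX (Spec.map (CommRingCat.ofHom (algebraMap k Ω))))
          (hL1 : L ≫ pullback.fst _ _ = Spec.map (CommRingCat.ofHom
            (Algebra.TensorProduct.includeLeftRingHom : R →+* R ⊗[k] Ω)) ≫ f)
          (hL2 : L ≫ pullback.snd _ _ = Spec.map (CommRingCat.ofHom
            ((Algebra.TensorProduct.includeRight : Ω →ₐ[k] R ⊗[k] Ω).toRingHom))),
          φ R f hf = L ≫ ψ) → ψ = φΩ) := by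
  classical
  obtain ⟨𝒜⟩ : Nonempty X.AffineOpenCover := ⟨X.affineOpenCover⟩
  let 𝒰 : X.OpenCover :=
    { I₀ := 𝒜.I₀
      X := fun j => Spec (𝒜.X j)
      f := 𝒜.f
      mem₀ := 𝒜.openCover.mem₀ }
  let Rt : 𝒜.I₀ → Type u := fun i => ↥(𝒜.X i)
  letI algI : ∀ i, Algebra k (Rt i) := fun i =>
    RingHom.toAlgebra ((Spec.preimage (𝒜.f i ≫ fX)).hom : k →+* Rt i)
  have hg : ∀ i, 𝒜.f i ≫ fX = Spec.map (CommRingCat.ofHom (algebraMap k (Rt i))) :=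
    fun i => (Spec.map_preimage (𝒜.f i ≫ fX)).symm
  have hcommR : ∀ (R : Type u) [CommRing R] [Algebra k R]
      (f : Spec (CommRingCat.of R) ⟶ X),
      f ≫ fX = Spec.map (CommRingCat.ofHom (algebraMap k R)) →
      (Spec.map (CommRingCat.ofHom
          (Algebra.TensorProduct.includeLeftRingHom : R →+* R ⊗[k] Ω)) ≫ f) ≫ fX =
        Spec.map (CommRingCat.ofHom
          ((Algebra.TensorProduct.includeRight : Ω →ₐ[k] R ⊗[k] Ω).toRingHom)) ≫
          Spec.map (CommRingCat.ofHom (algebraMap k Ω)) := by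
    intro R _ _ f hf
    rw [Category.assoc, hf, ← Spec.map_comp, ← Spec.map_comp]
    exact congrArg Spec.map (congrArg CommRingCat.ofHom (inc_comm k Ω R))
  let e : ∀ i, Spec (CommRingCat.of (Rt i ⊗[k] Ω)) ⟶
      pullback fX (Spec.map (CommRingCat.ofHom (algebraMap k Ω))) := fun i =>
    pullback.lift
      (Spec.map (CommRingCat.ofHom
        (Algebra.TensorProduct.includeLeftRingHom : Rt i →+* Rt i ⊗[k] Ω)) ≫ 𝒜.f i)
      (Spec.map (CommRingCat.ofHom
        ((Algebra.TensorProduct.includeRight : Ω →ₐ[k] Rt i ⊗[k] Ω).toRingHom)))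
      (hcommR (Rt i) (𝒜.f i) (hg i))
  have he1 : ∀ i, e i ≫ pullback.fst _ _ = Spec.map (CommRingCat.ofHom
      (Algebra.TensorProduct.includeLeftRingHom : Rt i →+* Rt i ⊗[k] Ω)) ≫ 𝒜.f i :=
    fun i => pullback.lift_fst _ _ _
  have he2 : ∀ i, e i ≫ pullback.snd _ _ = Spec.map (CommRingCat.ofHom
      ((Algebra.TensorProduct.includeRight : Ω →ₐ[k] Rt i ⊗[k] Ω).toRingHom)) :=
    fun i => pullback.lift_snd _ _ _
  let s : ∀ i, Spec (CommRingCat.of (Rt i ⊗[k] Ω)) ⟶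
      pullback (𝒜.f i ≫ fX) (Spec.map (CommRingCat.ofHom (algebraMap k Ω))) :=
    fun i =>
    pullback.lift
      (Spec.map (CommRingCat.ofHom
        (Algebra.TensorProduct.includeLeftRingHom : Rt i →+* Rt i ⊗[k] Ω)))
      (Spec.map (CommRingCat.ofHom
        ((Algebra.TensorProduct.includeRight : Ω →ₐ[k] Rt i ⊗[k] Ω).toRingHom)))
      (by rw [← Category.assoc]; exact hcommR (Rt i) (𝒜.f i) (hg i))
  have hs1 : ∀ i, s i ≫ pullback.fst _ _ = Spec.map (CommRingCat.ofHom
      (Algebra.TensorProduct.includeLeftRingHom : Rt i →+* Rt i ⊗[k] Ω)) :=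
    fun i => pullback.lift_fst _ _ _
  have hs2 : ∀ i, s i ≫ pullback.snd _ _ = Spec.map (CommRingCat.ofHom
      ((Algebra.TensorProduct.includeRight : Ω →ₐ[k] Rt i ⊗[k] Ω).toRingHom)) :=
    fun i => pullback.lift_snd _ _ _
  haveI hs : ∀ i, IsIso (s i) := by
    intro i
    have hsi : s i = (pullbackSpecIso k (Rt i) Ω).inv ≫ (pullback.congrHom (hg i) rfl).inv := by
      rw [pullback.congrHom_inv]
      apply pullback.hom_ext
      · rw [hs1 i, Category.assoc, pullback.lift_fst, ← Category.assoc,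
          pullbackSpecIso_inv_fst, Category.comp_id]
      · rw [hs2 i, Category.assoc, pullback.lift_snd, ← Category.assoc,
          pullbackSpecIso_inv_snd, Category.comp_id, AlgHom.toRingHom_eq_coe]
    rw [hsi]; infer_instance
  have hes : ∀ i, e i = s i ≫ (Scheme.Pullback.openCoverOfLeft 𝒰 fX
      (Spec.map (CommRingCat.ofHom (algebraMap k Ω)))).f i := by
    intro i
    apply pullback.hom_ext
    · rw [he1 i, Scheme.Pullback.openCoverOfLeft_f 𝒰 fX _ i, Category.assoc, pullback.lift_fst,
        ← Category.assoc, hs1 i]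
    · rw [he2 i, Scheme.Pullback.openCoverOfLeft_f 𝒰 fX _ i, Category.assoc, pullback.lift_snd,
        ← Category.assoc, hs2 i, Category.comp_id]
  let 𝒲 : (pullback fX (Spec.map (CommRingCat.ofHom (algebraMap k Ω)))).OpenCover :=
    Scheme.Cover.copy (Scheme.Pullback.openCoverOfLeft 𝒰 fX
        (Spec.map (CommRingCat.ofHom (algebraMap k Ω))))
      𝒜.I₀ (fun i => Spec (CommRingCat.of (Rt i ⊗[k] Ω))) e
      (Equiv.refl _) (fun i => @asIso _ _ _ _ (s i) (hs i)) (fun i => hes i)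
  let φi : ∀ i, Spec (CommRingCat.of (Rt i ⊗[k] Ω)) ⟶ S :=
    fun i => φ (Rt i) (𝒜.f i) (hg i)
  have hcomp : ∀ (i j : 𝒜.I₀), pullback.fst (𝒲.f i) (𝒲.f j) ≫ φi i =
      pullback.snd (𝒲.f i) (𝒲.f j) ≫ φi j := by
    intro i j
    refine key k Ω X S fX φ hnat (Rt i) (Rt j) (𝒜.f i) (𝒜.f j) (hg i) (hg j) _
      (pullback.fst (𝒲.f i) (𝒲.f j)) (pullback.snd (𝒲.f i) (𝒲.f j)) ?_ ?_
    · rw [← he1 i, ← he1 j]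
      exact pullback.condition_assoc _
    · rw [← he2 i, ← he2 j]
      exact pullback.condition_assoc _
  refine ⟨𝒲.glueMorphisms φi hcomp, ?_, ?_, ?_⟩
  · refine 𝒲.hom_ext _ _ fun (i : 𝒜.I₀) => ?_
    rw [← Category.assoc, Scheme.Cover.ι_glueMorphisms 𝒲 φi hcomp i]
    show φi i ≫ fS = e i ≫ pullback.snd _ _
    rw [he2 i]
    exact hover (Rt i) (𝒜.f i) (hg i)
  · intro R _ _ f hf L hL1 hL2
    refine Scheme.Cover.hom_ext (𝒲.pullback₁ L) _ _ fun (i : 𝒜.I₀) => ?_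
    show pullback.fst L (𝒲.f i) ≫ φ R f hf =
      pullback.fst L (𝒲.f i) ≫ L ≫ 𝒲.glueMorphisms φi hcomp
    have hr : pullback.fst L (𝒲.f i) ≫ L ≫ 𝒲.glueMorphisms φi hcomp =
        pullback.snd L (𝒲.f i) ≫ φi i := by
      rw [← Category.assoc, pullback.condition, Category.assoc,
        Scheme.Cover.ι_glueMorphisms 𝒲 φi hcomp i]
    rw [hr]
    refine key k Ω X S fX φ hnat R (Rt i) f (𝒜.f i) hf (hg i) _
      (pullback.fst L (𝒲.f i)) (pullback.snd L (𝒲.f i)) ?_ ?_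
    · rw [← hL1, ← he1 i]
      exact pullback.condition_assoc _
    · rw [← hL2, ← he2 i]
      exact pullback.condition_assoc _
  · intro ψ hψ
    refine 𝒲.hom_ext _ _ fun (i : 𝒜.I₀) => ?_
    rw [Scheme.Cover.ι_glueMorphisms 𝒲 φi hcomp i]
    show e i ≫ ψ = φi i
    exact (hψ (Rt i) (𝒜.f i) (hg i) (e i) (he1 i) (he2 i)).symm

end Stmt1Aux


open AlgebraicGeometry CategoryTheory CategoryTheory.Limits TensorProduct in
/-- Universal property of extension of scalars for schemes. Given a natural
family `φ` sending `k`-morphisms `Spec R ⟶ X` to `Ω`-morphisms `Spec (R ⊗[k] Ω) ⟶ S`,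
there is a unique `Ω`-morphism `φ_Ω : X ×_{Spec k} Spec Ω ⟶ S` through which every
`φ_R(f)` factors via the base-change morphism
`Spec (R ⊗[k] Ω) ⟶ X ×_{Spec k} Spec Ω` induced by `f`. -/
theorem stmt_1 (k : Type u) [Field k] (Ω : Type u) [CommRing Ω] [Algebra k Ω]
    (X S : Scheme.{u}) (fX : X ⟶ Spec (CommRingCat.of k))
    (fS : S ⟶ Spec (CommRingCat.of Ω))
    (φ : ∀ (R : Type u) [CommRing R] [Algebra k R]
      (f : Spec (CommRingCat.of R) ⟶ X),
      f ≫ fX = Spec.map (CommRingCat.ofHom (algebraMap k R)) →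
      (Spec (CommRingCat.of (R ⊗[k] Ω)) ⟶ S))
    (hover : ∀ (R : Type u) [CommRing R] [Algebra k R]
      (f : Spec (CommRingCat.of R) ⟶ X)
      (hf : f ≫ fX = Spec.map (CommRingCat.ofHom (algebraMap k R))),
      φ R f hf ≫ fS = Spec.map (CommRingCat.ofHom
        ((Algebra.TensorProduct.includeRight : Ω →ₐ[k] R ⊗[k] Ω).toRingHom)))
    (hnat : ∀ (R' R : Type u) [CommRing R'] [Algebra k R'] [CommRing R] [Algebra k R]
      (g : R' →ₐ[k] R) (f : Spec (CommRingCat.of R') ⟶ X)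
      (hf : f ≫ fX = Spec.map (CommRingCat.ofHom (algebraMap k R')))
      (hgf : (Spec.map (CommRingCat.ofHom (g : R' →+* R)) ≫ f) ≫ fX =
        Spec.map (CommRingCat.ofHom (algebraMap k R))),
      φ R (Spec.map (CommRingCat.ofHom (g : R' →+* R)) ≫ f) hgf =
        Spec.map (CommRingCat.ofHom
          ((Algebra.TensorProduct.map g (AlgHom.id k Ω)).toRingHom)) ≫ φ R' f hf) :
    ∃! φΩ : pullback fX (Spec.map (CommRingCat.ofHom (algebraMap k Ω))) ⟶ S,
      φΩ ≫ fS = pullback.snd fX (Spec.map (CommRingCat.ofHom (algebraMap k Ω))) ∧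
      ∀ (R : Type u) [CommRing R] [Algebra k R]
        (f : Spec (CommRingCat.of R) ⟶ X)
        (hf : f ≫ fX = Spec.map (CommRingCat.ofHom (algebraMap k R)))
        (hcomm : (Spec.map (CommRingCat.ofHom
            (Algebra.TensorProduct.includeLeftRingHom : R →+* R ⊗[k] Ω)) ≫ f) ≫ fX =
          Spec.map (CommRingCat.ofHom
            ((Algebra.TensorProduct.includeRight : Ω →ₐ[k] R ⊗[k] Ω).toRingHom)) ≫
            Spec.map (CommRingCat.ofHom (algebraMap k Ω))),
        φ R f hf =
          pullback.lift
            (Spec.map (CommRingCat.ofHom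
              (Algebra.TensorProduct.includeLeftRingHom : R →+* R ⊗[k] Ω)) ≫ f)
            (Spec.map (CommRingCat.ofHom
              ((Algebra.TensorProduct.includeRight : Ω →ₐ[k] R ⊗[k] Ω).toRingHom)))
            hcomm ≫ φΩ := by
  obtain ⟨φΩ, h1, h2, h3⟩ := Stmt1Aux.mainlem k Ω X S fX φ hnat fS hover
  refine ⟨φΩ, ⟨h1, ?_⟩, ?_⟩
  · intro R _ _ f hf hcomm
    exact h2 R f hf _ (pullback.lift_fst _ _ _) (pullback.lift_snd _ _ _)
  · rintro ψ ⟨hψ1, hψ2⟩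
    refine h3 ψ ?_
    intro R _ _ f hf L hL1 hL2
    have hcomm : (Spec.map (CommRingCat.ofHom
        (Algebra.TensorProduct.includeLeftRingHom : R →+* R ⊗[k] Ω)) ≫ f) ≫ fX =
        Spec.map (CommRingCat.ofHom
          ((Algebra.TensorProduct.includeRight : Ω →ₐ[k] R ⊗[k] Ω).toRingHom)) ≫
          Spec.map (CommRingCat.ofHom (algebraMap k Ω)) := by
      rw [← hL1, ← hL2, Category.assoc, Category.assoc, pullback.condition]
    have hL : L = pullback.lift _ _ hcomm := by
      apply pullback.hom_ext
      · rw [pullback.lift_fst, hL1]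
      · rw [pullback.lift_snd, hL2]
    rw [hψ2 R f hf hcomm, ← hL]
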